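/- Let X : H0 -> H1 be a contractive solution of the Riccati equation such that the orthogonal projection Q onto G(H0,X) commutes with the orthogonal projection onto every closed B-invariant subspace of H. Let S denote the set of all contractive solutions of the Riccati equation. Then the map T_X defined on S by T_X(Y) = Ker(I + Y*X) is injective, and its range equals R, the set of all closed subspaces L of H0 such that L ⊆ Ker(I - X*X) ∩ Ker(X V X - V*) and L reduces both A0 and V X. -/

import Mathlib

noncomputable section

open ContinuousLinearMap
namespace RicAux

variable {H0 H1 : Type*}
  [NormedAddCommGroup H0] [InnerProductSpace ℂ H0] [CompleteSpace H0]
  [NormedAddCommGroup H1] [InnerProductSpace ℂ H1] [CompleteSpace H1]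

local notation "⟪" x ", " y "⟫" => @inner ℂ _ _ x y

/-- If a contraction preserves the norm of `u`, then `T† T u = u`. -/
lemma adj_fix (T : H0 →L[ℂ] H1) (hT : ‖T‖ ≤ 1) (u : H0) (h : ‖T u‖ = ‖u‖) :
    adjoint T (T u) = u := by
  have hadj : ‖adjoint T (T u)‖ ≤ ‖u‖ := by
    calc ‖adjoint T (T u)‖ ≤ ‖adjoint T‖ * ‖T u‖ := le_opNorm _ _
    _ ≤ 1 * ‖u‖ := by
        rw [h]
        have : ‖adjoint T‖ = ‖T‖ := adjoint.norm_map T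
        exact mul_le_mul_of_nonneg_right (this ▸ hT) (norm_nonneg u)
    _ = ‖u‖ := one_mul _
  have hre : RCLike.re ⟪adjoint T (T u), u⟫ = ‖u‖ ^ 2 := by
    rw [adjoint_inner_left]
    rw [← h]
    simpa using inner_self_eq_norm_sq (𝕜 := ℂ) (T u)
  have hns : ‖adjoint T (T u) - u‖ ^ 2 ≤ 0 := by
    rw [norm_sub_sq (𝕜 := ℂ), hre]
    nlinarith [norm_nonneg (adjoint T (T u)), norm_nonneg u]
  have : adjoint T (T u) - u = 0 := by
    have := norm_nonneg (adjoint T (T u) - u)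
    have h2 : ‖adjoint T (T u) - u‖ = 0 := by nlinarith
    exact norm_eq_zero.mp h2
  exact sub_eq_zero.mp this

/-- Facts about elements of `ker (1 + Y† X)` for contractions `X, Y`. -/
lemma ker_facts (X Y : H0 →L[ℂ] H1) (hXn : ‖X‖ ≤ 1) (hYn : ‖Y‖ ≤ 1)
    (l : H0) (hl : adjoint Y (X l) = -l) :
    adjoint X (X l) = l ∧ Y l = -X l := by
  have hXl : ‖X l‖ = ‖l‖ := by
    have h1 : ‖X l‖ ≤ ‖l‖ := by
      calc ‖X l‖ ≤ ‖X‖ * ‖l‖ := le_opNorm _ _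
      _ ≤ 1 * ‖l‖ := mul_le_mul_of_nonneg_right hXn (norm_nonneg l)
      _ = ‖l‖ := one_mul _
    have h2 : ‖l‖ ≤ ‖X l‖ := by
      have : ‖l‖ = ‖adjoint Y (X l)‖ := by rw [hl, norm_neg]
      rw [this]
      calc ‖adjoint Y (X l)‖ ≤ ‖adjoint Y‖ * ‖X l‖ := le_opNorm _ _
      _ ≤ 1 * ‖X l‖ := by
          have hadj : ‖adjoint Y‖ = ‖Y‖ := adjoint.norm_map Y
          exact mul_le_mul_of_nonneg_right (hadj ▸ hYn) (norm_nonneg _)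
      _ = ‖X l‖ := one_mul _
    linarith
  refine ⟨adj_fix X hXn l hXl, ?_⟩
  have hYs : ‖adjoint Y (X l)‖ = ‖X l‖ := by rw [hl, norm_neg, hXl]
  have hYn' : ‖adjoint Y‖ ≤ 1 := by rw [adjoint.norm_map]; exact hYn
  have := adj_fix (adjoint Y) hYn' (X l) hYs
  rw [adjoint_adjoint, hl, map_neg] at this
  rw [← this, neg_neg]

/-- If `X† X u + u = P u + P u` with `P` ranging in the "isometric" subspace `L`,
then `u ∈ L`. -/
lemma mem_of_eq (X : H0 →L[ℂ] H1) (L : Submodule ℂ H0) (P : H0 →L[ℂ] H0)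
    (hPmem : ∀ x, P x ∈ L) (hL1 : ∀ l ∈ L, adjoint X (X l) = l)
    (u : H0) (hu : adjoint X (X u) + u = P u + P u) : u = P u := by
  set q := u - P u with hq
  have hXq : adjoint X (X q) = -q := by
    have h1 : adjoint X (X (P u)) = P u := hL1 _ (hPmem u)
    have : adjoint X (X q) = adjoint X (X u) - P u := by
      simp [hq, map_sub, h1]
    rw [this]
    have : adjoint X (X u) = P u + P u - u := by
      have h := hu
      have : adjoint X (X u) = P u + P u - u := by
        rw [← h]; abel
      exact this
    rw [this, hq]; abel
  have hn : RCLike.re ⟪X q, X q⟫ = - (‖q‖^2) := by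
    rw [← adjoint_inner_left, hXq, inner_neg_left]
    have : (⟪q, q⟫).re = ‖q‖ ^ 2 := by
      simpa using inner_self_eq_norm_sq (𝕜 := ℂ) q
    rw [map_neg]; exact congrArg Neg.neg this
  have h0 : ‖X q‖ ^ 2 = - (‖q‖^2) := by
    rw [← hn]; simpa using (inner_self_eq_norm_sq (𝕜 := ℂ) (X q)).symm
  have : ‖q‖ ^ 2 ≤ 0 := by nlinarith [sq_nonneg (‖X q‖), norm_nonneg (X q)]
  have hq0 : q = 0 := by
    have := sq_nonneg (‖q‖)
    have : ‖q‖ = 0 := by nlinarith [norm_nonneg q]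
    exact norm_eq_zero.mp this
  have : u - P u = 0 := hq0
  exact (sub_eq_zero.mp this)

lemma sa_inner {E : Type*} [NormedAddCommGroup E] [InnerProductSpace ℂ E] [CompleteSpace E]
    (A : E →L[ℂ] E) (hA : IsSelfAdjoint A) (x y : E) : ⟪A x, y⟫ = ⟪x, A y⟫ := by
  conv_lhs => rw [← hA.adjoint_eq]
  exact adjoint_inner_left A y x

/-- Pointwise "star identity" for a solution `W` of the Riccati equation. -/
lemma star_pt (A0 : H0 →L[ℂ] H0) (A1 : H1 →L[ℂ] H1) (V : H1 →L[ℂ] H0)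
    (hA0 : IsSelfAdjoint A0) (hA1 : IsSelfAdjoint A1) (W : H0 →L[ℂ] H1)
    (hW : ∀ x, A1 (W x) = W (A0 x) + W (V (W x)) - adjoint V x) :
    ∀ x, adjoint W (adjoint V x) + adjoint W (adjoint V (adjoint W (W x)))
        + A0 (adjoint W (W x))
      = adjoint W (W (A0 x)) + adjoint W (W (V (W x))) + V (W x) := by
  have hWadj : ∀ z, adjoint W (A1 z)
      = A0 (adjoint W z) + adjoint W (adjoint V (adjoint W z)) - V z := by
    intro z
    apply ext_inner_right ℂ
    intro w
    rw [adjoint_inner_left]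
    rw [sa_inner A1 hA1 z (W w)]
    rw [hW w]
    rw [inner_sub_right, inner_add_right, inner_sub_left, inner_add_left]
    have e1 : ⟪z, W (A0 w)⟫ = ⟪A0 (adjoint W z), w⟫ := by
      rw [← adjoint_inner_left W]
      exact (sa_inner A0 hA0 (adjoint W z) w).symm
    have e2 : ⟪z, W (V (W w))⟫ = ⟪adjoint W (adjoint V (adjoint W z)), w⟫ := by
      rw [← adjoint_inner_left W, ← adjoint_inner_left V, ← adjoint_inner_left W]
    have e3 : ⟪z, adjoint V w⟫ = ⟪V z, w⟫ := adjoint_inner_right V z w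
    rw [e1, e2, e3]
  intro x
  have h1 : adjoint W (A1 (W x))
      = adjoint W (W (A0 x)) + adjoint W (W (V (W x))) - adjoint W (adjoint V x) := by
    rw [hW x]; simp [map_sub, map_add]
  have h2 : adjoint W (A1 (W x))
      = A0 (adjoint W (W x)) + adjoint W (adjoint V (adjoint W (W x))) - V (W x) :=
    hWadj (W x)
  have key := h1.symm.trans h2
  linear_combination (norm := module) -key

set_option maxHeartbeats 2000000 in
lemma hard_alg (A0 : H0 →L[ℂ] H0) (A1 : H1 →L[ℂ] H1) (V : H1 →L[ℂ] H0)
    (hA0 : IsSelfAdjoint A0) (hA1 : IsSelfAdjoint A1)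
    (X Y : H0 →L[ℂ] H1)
    (hX : ∀ x, A1 (X x) = X (A0 x) + X (V (X x)) - adjoint V x)
    (hY : ∀ x, A1 (Y x) = Y (A0 x) + Y (V (Y x)) - adjoint V x)
    (L : Submodule ℂ H0) (P : H0 →L[ℂ] H0)
    (hPmem : ∀ x, P x ∈ L) (hPid : ∀ l ∈ L, P l = l)
    (hPsa : ∀ x y, ⟪P x, y⟫ = ⟪x, P y⟫)
    (hL1 : ∀ l ∈ L, adjoint X (X l) = l)
    (hYX : ∀ x, Y x = X x - X (P x) - X (P x)) :
    (∀ x, P (A0 x) = A0 (P x)) ∧ (∀ x, P (V (X x)) = V (X (P x))) ∧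
      (∀ x, X (V (X (P x))) = adjoint V (P x)) := by
  have hGP : ∀ z, adjoint X (X (P z)) = P z := fun z => hL1 _ (hPmem z)
  have hPP : ∀ z, P (P z) = P z := fun z => hPid _ (hPmem z)
  have hPG : ∀ z, P (adjoint X (X z)) = P z := by
    intro z
    apply ext_inner_right ℂ
    intro y
    calc ⟪P (adjoint X (X z)), y⟫ = ⟪adjoint X (X z), P y⟫ := hPsa _ _
    _ = ⟪X z, X (P y)⟫ := adjoint_inner_left X (P y) (X z)
    _ = ⟪z, adjoint X (X (P y))⟫ := (adjoint_inner_right X z (X (P y))).symm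
    _ = ⟪z, P y⟫ := by rw [hGP y]
    _ = ⟪P z, y⟫ := (hPsa z y).symm
  have hYs : ∀ z, adjoint Y z = adjoint X z - P (adjoint X z) - P (adjoint X z) := by
    intro z
    apply ext_inner_right ℂ
    intro w
    have h0 : ⟪adjoint Y z, w⟫ = ⟪z, Y w⟫ := adjoint_inner_left Y w z
    rw [h0, hYX w, inner_sub_right, inner_sub_right, inner_sub_left, inner_sub_left]
    have hXz : ⟪z, X w⟫ = ⟪adjoint X z, w⟫ := (adjoint_inner_left X w z).symm
    have hXPz : ⟪z, X (P w)⟫ = ⟪P (adjoint X z), w⟫ := by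
      rw [← adjoint_inner_left X]
      exact (hPsa _ _).symm
    rw [hXz, hXPz]
  have hGY : ∀ x, adjoint Y (Y x) = adjoint X (X x) := by
    intro x
    have e1 : adjoint X (Y x) = adjoint X (X x) - P x - P x := by
      rw [hYX x, map_sub, map_sub, hGP]
    rw [hYs (Y x), e1]
    have e2 : P (adjoint X (X x) - P x - P x) = P x - P x - P x := by
      rw [map_sub, map_sub, hPG, hPP]
    rw [e2]
    abel
  have hstX := star_pt A0 A1 V hA0 hA1 X hX
  have hstY := star_pt A0 A1 V hA0 hA1 Y hY
  have hstar : ∀ x, P (adjoint X (adjoint V x))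
        + P (adjoint X (adjoint V (adjoint X (X x))))
      = adjoint X (X (V (X (P x)))) + V (X (P x)) := by
    intro x
    have eY := hstY x
    simp only [hGY] at eY
    simp only [hYs] at eY
    simp only [hYX] at eY
    simp only [map_sub] at eY
    have eX := hstX x
    linear_combination (norm := module) ((-1/2 : ℂ)) • eY - ((-1/2 : ℂ)) • eX
  have hiv : ∀ x, P (V (X (P x))) = V (X (P x)) := by
    intro x
    have hw : P (adjoint X (adjoint V x))
        + P (adjoint X (adjoint V (adjoint X (X x)))) ∈ L :=
      add_mem (hPmem _) (hPmem _)
    have hPw := hPid _ hw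
    have hPapp : P (adjoint X (adjoint V x))
        + P (adjoint X (adjoint V (adjoint X (X x))))
        = P (adjoint X (X (V (X (P x))))) + P (V (X (P x))) := by
      have h1 := congrArg (fun t => P t) (hstar x)
      simp only [map_add] at h1
      rw [hPP, hPP] at h1
      exact h1
    have hmem : adjoint X (X (V (X (P x)))) + V (X (P x))
        = P (V (X (P x))) + P (V (X (P x))) := by
      have hPGu : P (adjoint X (X (V (X (P x))))) = P (V (X (P x))) := hPG _
      linear_combination (norm := module) -(hstar x) + hPapp + hPGu
    exact (mem_of_eq X L P hPmem hL1 _ hmem).symm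
  have hGu : ∀ x, adjoint X (X (V (X (P x)))) = V (X (P x)) := by
    intro x
    have hm : V (X (P x)) ∈ L := by
      rw [← hiv x]; exact hPmem _
    exact hL1 _ hm
  have hc1 : ∀ w z, ⟪P (adjoint X (adjoint V w)), z⟫ = ⟪w, V (X (P z))⟫ := by
    intro w z
    calc ⟪P (adjoint X (adjoint V w)), z⟫
        = ⟪adjoint X (adjoint V w), P z⟫ := hPsa _ _
    _ = ⟪adjoint V w, X (P z)⟫ := adjoint_inner_left X (P z) (adjoint V w)
    _ = ⟪w, V (X (P z))⟫ := adjoint_inner_left V (X (P z)) w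
  have hfP : ∀ z, P (adjoint X (adjoint V (P z))) = V (X (P z)) := by
    intro z
    have h := hstar (P z)
    rw [hGP z, hPP z, hGu z] at h
    rw [← two_smul ℂ, ← two_smul ℂ] at h
    exact smul_right_injective H0 (two_ne_zero) h
  have hfull : ∀ x, P (adjoint X (adjoint V x)) = V (X (P x)) := by
    intro x
    have hmid : P (adjoint X (adjoint V x)) = P (adjoint X (adjoint V (P x))) := by
      apply ext_inner_right ℂ
      intro y
      rw [hc1 x y, hc1 (P x) y]
      calc ⟪x, V (X (P y))⟫ = ⟪x, P (V (X (P y)))⟫ := by rw [hiv y]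
      _ = ⟪P x, V (X (P y))⟫ := (hPsa x _).symm
    rw [hmid, hfP x]
  have hsp : ∀ x, X (A0 (P x)) + X (V (X (P x))) + X (V (X (P x))) - adjoint V (P x)
      = X (P (A0 x)) + X (P (V (X x))) := by
    intro x
    have eY := hY x
    simp only [hYX] at eY
    simp only [map_sub] at eY
    simp only [hiv] at eY
    have eX := hX x
    have eXP := hX (P x)
    linear_combination (norm := module) -eXP + ((1/2 : ℂ)) • eX - ((1/2 : ℂ)) • eY
  have h2pt : ∀ x, adjoint X (X (A0 (P x))) + V (X (P x)) + V (X (P x))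
      - adjoint X (adjoint V (P x)) = P (A0 x) + P (V (X x)) := by
    intro x
    have h := congrArg (fun t => adjoint X t) (hsp x)
    simp only [map_add, map_sub] at h
    rw [hGu x, hGP (A0 x), hGP (V (X x))] at h
    exact h
  have h3pt : ∀ x, P (A0 (P x)) + V (X (P x)) = P (A0 x) + P (V (X x)) := by
    intro x
    have h := congrArg (fun t => P t) (h2pt x)
    simp only [map_add, map_sub] at h
    rw [hPG (A0 (P x)), hiv x, hfP x, hPP (A0 x), hPP (V (X x))] at h
    linear_combination (norm := module) h
  have h3star : ∀ x, P (A0 (P x)) + P (adjoint X (adjoint V x))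
      = A0 (P x) + adjoint X (adjoint V (P x)) := by
    intro x
    apply ext_inner_right ℂ
    intro y
    have l1 : ⟪P (A0 (P x)), y⟫ = ⟪x, P (A0 (P y))⟫ := by
      rw [hPsa, sa_inner A0 hA0, hPsa]
    have l2 : ⟪P (adjoint X (adjoint V x)), y⟫ = ⟪x, V (X (P y))⟫ := hc1 x y
    have r1 : ⟪A0 (P x), y⟫ = ⟪x, P (A0 y)⟫ := by
      rw [sa_inner A0 hA0, hPsa]
    have r2 : ⟪adjoint X (adjoint V (P x)), y⟫ = ⟪x, P (V (X y))⟫ := by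
      rw [adjoint_inner_left X, adjoint_inner_left V, hPsa]
    rw [inner_add_left, inner_add_left, l1, l2, r1, r2, ← inner_add_right, ← inner_add_right]
    rw [h3pt y]
  have hA0P : ∀ x, A0 (P x) = P (A0 (P x)) := by
    intro x
    have h5 : adjoint X (X (A0 (P x))) + A0 (P x) = P (A0 (P x)) + P (A0 (P x)) := by
      linear_combination (norm := module) h2pt x - h3pt x - h3star x + hfull x
    exact mem_of_eq X L P hPmem hL1 _ h5
  have hDcomm : ∀ x, P (A0 x) = A0 (P x) := by
    intro x
    have key : ∀ w z, ⟪P (A0 w) - A0 (P w), z⟫ = ⟪w, A0 (P z) - P (A0 z)⟫ := by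
      intro w z
      rw [inner_sub_left, inner_sub_right]
      congr 1
      · rw [hPsa, sa_inner A0 hA0]
      · rw [sa_inner A0 hA0, hPsa]
    have hx0 : P (A0 x) - A0 (P x) = 0 := by
      have e1 : P (P (A0 x) - A0 (P x)) = P (A0 x) - A0 (P x) := by
        rw [map_sub, hPP (A0 x), ← hA0P x]
      apply ext_inner_right ℂ
      intro y
      rw [inner_zero_left, ← e1, hPsa]
      rw [key x (P y)]
      rw [hPP y, ← hA0P y, sub_self, inner_zero_right]
    linear_combination (norm := module) hx0
  have hVXcomm : ∀ x, P (V (X x)) = V (X (P x)) := by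
    intro x
    linear_combination (norm := module) -(h3pt x) - hA0P x - hDcomm x
  have hXVX : ∀ x, X (V (X (P x))) = adjoint V (P x) := by
    intro x
    linear_combination (norm := module) hsp x + congrArg (fun t => X t) (hDcomm x)
      + congrArg (fun t => X t) (hVXcomm x)
  exact ⟨hDcomm, hVXcomm, hXVX⟩

set_option maxHeartbeats 1000000 in
lemma decomp
    (X Y : H0 →L[ℂ] H1)
    (A0 : H0 →L[ℂ] H0) (A1 : H1 →L[ℂ] H1) (V : H1 →L[ℂ] H0)
    (B : WithLp 2 (H0 × H1) →L[ℂ] WithLp 2 (H0 × H1))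
    (hB : ∀ u : WithLp 2 (H0 × H1),
      WithLp.equiv 2 (H0 × H1) (B u) =
        (A0 (WithLp.equiv 2 (H0 × H1) u).1 + V (WithLp.equiv 2 (H0 × H1) u).2,
         adjoint V (WithLp.equiv 2 (H0 × H1) u).1 + A1 (WithLp.equiv 2 (H0 × H1) u).2))
    (Q : WithLp 2 (H0 × H1) →L[ℂ] WithLp 2 (H0 × H1))
    (hQ : IsIdempotentElem Q)
    (hQran : LinearMap.range Q.toLinearMap =
      (LinearMap.graph X.toLinearMap).map (WithLp.linearEquiv 2 ℂ (H0 × H1)).symm.toLinearMap)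
    (hQcomm : ∀ R : WithLp 2 (H0 × H1) →L[ℂ] WithLp 2 (H0 × H1),
      IsIdempotentElem R → IsSelfAdjoint R →
      (∀ u ∈ LinearMap.range R.toLinearMap, B u ∈ LinearMap.range R.toLinearMap) → Q * R = R * Q)
    (hY : ∀ x, A1 (Y x) = Y (A0 x) + Y (V (Y x)) - adjoint V x) :
    ∀ x : H0, ∃ n l : H0, Y n = X n ∧ adjoint Y (X l) = -l ∧ x = n + l := by
  classical
  set fstL : WithLp 2 (H0 × H1) →L[ℂ] H0 :=
    (ContinuousLinearMap.fst ℂ H0 H1).comp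
      (WithLp.prodContinuousLinearEquiv 2 ℂ H0 H1).toContinuousLinearMap with hfstL
  set sndL : WithLp 2 (H0 × H1) →L[ℂ] H1 :=
    (ContinuousLinearMap.snd ℂ H0 H1).comp
      (WithLp.prodContinuousLinearEquiv 2 ℂ H0 H1).toContinuousLinearMap with hsndL
  set Φ : WithLp 2 (H0 × H1) →L[ℂ] H1 := Y.comp fstL - sndL with hΦdef
  have hΦ : ∀ u : WithLp 2 (H0 × H1), Φ u = Y u.fst - u.snd := fun u => rfl
  set K := LinearMap.ker Φ.toLinearMap with hKdef
  have hKmem : ∀ u : WithLp 2 (H0 × H1), u ∈ K ↔ Y u.fst = u.snd := by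
    intro u
    rw [hKdef, LinearMap.mem_ker, ContinuousLinearMap.coe_coe]
    rw [show Φ u = Y u.fst - u.snd from rfl]
    constructor
    · intro h; exact sub_eq_zero.mp h
    · intro h; rw [h, sub_self]
  have hKc : IsClosed (K : Set (WithLp 2 (H0 × H1))) := ContinuousLinearMap.isClosed_ker Φ
  haveI : CompleteSpace K := hKc.completeSpace_coe
  set R : WithLp 2 (H0 × H1) →L[ℂ] WithLp 2 (H0 × H1) :=
    K.subtypeL ∘L K.orthogonalProjectionOnto with hRdef
  have hRK : ∀ u, R u ∈ K := fun u => (K.orthogonalProjectionOnto u).2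
  have hRid : ∀ u ∈ K, R u = u := by
    intro u hu
    show (K.orthogonalProjectionOnto u : WithLp 2 (H0 × H1)) = u
    have : K.orthogonalProjectionOnto ((⟨u, hu⟩ : K) : WithLp 2 (H0 × H1)) = ⟨u, hu⟩ :=
      Submodule.orthogonalProjectionOnto_mem_subspace_eq_self _
    rw [show ((⟨u, hu⟩ : K) : WithLp 2 (H0 × H1)) = u from rfl] at this
    rw [this]
  have hRidem : IsIdempotentElem R := by
    apply ContinuousLinearMap.ext
    intro u
    show R (R u) = R u
    exact hRid _ (hRK u)
  have hRsa : IsSelfAdjoint R := isSelfAdjoint_starProjection K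
  have hRrange : LinearMap.range R.toLinearMap = K := by
    apply le_antisymm
    · rintro _ ⟨u, rfl⟩; exact hRK u
    · intro u hu; exact ⟨u, hRid u hu⟩
  have hRinv : ∀ u ∈ LinearMap.range R.toLinearMap, B u ∈ LinearMap.range R.toLinearMap := by
    rw [hRrange]
    intro u hu
    have hu' : Y u.fst = u.snd := (hKmem u).mp hu
    rw [hKmem]
    have h1 : (B u).fst = A0 u.fst + V u.snd := congrArg Prod.fst (hB u)
    have h2 : (B u).snd = adjoint V u.fst + A1 u.snd := congrArg Prod.snd (hB u)
    rw [h1, h2, ← hu', map_add]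
    linear_combination (norm := module) -(hY u.fst)
  have hc := hQcomm R hRidem hRsa hRinv
  intro x
  set u : WithLp 2 (H0 × H1) := (WithLp.linearEquiv 2 ℂ (H0 × H1)).symm (x, X x) with hudef
  have hu : u ∈ LinearMap.range Q.toLinearMap := by
    rw [hQran]
    exact Submodule.mem_map.mpr ⟨(x, X x), (LinearMap.mem_graph_iff _ _).mpr rfl, rfl⟩
  have hQu : Q u = u := by
    obtain ⟨w, hw⟩ := hu
    rw [← hw, ContinuousLinearMap.coe_coe, ← ContinuousLinearMap.mul_apply, hQ.eq]
  have haQ : R u ∈ LinearMap.range Q.toLinearMap := by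
    have : R u = Q (R u) := by
      conv_lhs => rw [← hQu]
      rw [← ContinuousLinearMap.mul_apply, ← hc, ContinuousLinearMap.mul_apply]
    exact ⟨R u, this.symm⟩
  rw [hQran] at haQ
  obtain ⟨⟨n, m⟩, hg, hna⟩ := Submodule.mem_map.mp haQ
  have hm : m = X n := (LinearMap.mem_graph_iff _ _).mp hg
  have ha_fst : (R u).fst = n := by rw [← hna]; rfl
  have ha_snd : (R u).snd = X n := by rw [← hna, hm]; rfl
  have haK : Y (R u).fst = (R u).snd := (hKmem _).mp (hRK u)
  rw [ha_fst, ha_snd] at haK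
  set l := x - n with hldef
  have hufst : u.fst = x := rfl
  have husnd : u.snd = X x := rfl
  have hbfst : (u - R u).fst = l := by rw [WithLp.sub_fst, hufst, ha_fst]
  have hbsnd : (u - R u).snd = X l := by rw [WithLp.sub_snd, husnd, ha_snd, hldef, map_sub]
  have hbperp : u - R u ∈ Kᗮ := Submodule.sub_starProjection_mem_orthogonal u
  have hl : adjoint Y (X l) = -l := by
    have hz : ∀ z : H0, ⟪z, l + adjoint Y (X l)⟫ = 0 := by
      intro z
      set w : WithLp 2 (H0 × H1) := (WithLp.linearEquiv 2 ℂ (H0 × H1)).symm (z, Y z) with hwdef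
      have hwK : w ∈ K := by
        rw [hKmem]; rfl
      have h0 : ⟪w, u - R u⟫ = 0 := (Submodule.mem_orthogonal K _).mp hbperp w hwK
      rw [WithLp.prod_inner_apply] at h0
      change ⟪w.fst, (u - R u).fst⟫ + ⟪w.snd, (u - R u).snd⟫ = 0 at h0
      rw [hbfst, hbsnd] at h0
      have hwfst : w.fst = z := rfl
      have hwsnd : w.snd = Y z := rfl
      rw [hwfst, hwsnd] at h0
      rw [inner_add_right]
      rw [← adjoint_inner_right Y z (X l)] at h0
      exact h0
    have h := hz (l + adjoint Y (X l))
    have := inner_self_eq_zero.mp h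
    linear_combination (norm := module) this
  exact ⟨n, l, haK, hl, by rw [hldef]; abel⟩

set_option maxHeartbeats 2000000 in
lemma easy_dir (A0 : H0 →L[ℂ] H0) (A1 : H1 →L[ℂ] H1) (V : H1 →L[ℂ] H0)
    (X : H0 →L[ℂ] H1) (hXnorm : ‖X‖ ≤ 1)
    (hX : ∀ x, A1 (X x) = X (A0 x) + X (V (X x)) - adjoint V x)
    (L : Submodule ℂ H0) (P : H0 →L[ℂ] H0)
    (hPmem : ∀ x, P x ∈ L) (hPid : ∀ l ∈ L, P l = l)
    (hPsa : ∀ x y, ⟪P x, y⟫ = ⟪x, P y⟫)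
    (hPperp : ∀ x, x - P x ∈ Lᗮ)
    (hPker : ∀ x ∈ Lᗮ, P x = 0)
    (hL1 : ∀ l ∈ L, adjoint X (X l) = l)
    (hL2 : ∀ l ∈ L, X (V (X l)) = adjoint V l)
    (hA0L : ∀ l ∈ L, A0 l ∈ L) (hA0L' : ∀ m ∈ Lᗮ, A0 m ∈ Lᗮ)
    (hVXL : ∀ l ∈ L, V (X l) ∈ L) (hVXL' : ∀ m ∈ Lᗮ, V (X m) ∈ Lᗮ) :
    ‖X - (2:ℂ) • (X.comp P)‖ ≤ 1 ∧
    (A1.comp (X - (2:ℂ) • (X.comp P)) - (X - (2:ℂ) • (X.comp P)).comp A0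
      - (X - (2:ℂ) • (X.comp P)).comp (V.comp (X - (2:ℂ) • (X.comp P)))
      + adjoint V = 0) ∧
    LinearMap.ker (ContinuousLinearMap.id ℂ H0
      + (adjoint (X - (2:ℂ) • (X.comp P))).comp X).toLinearMap = L := by
  set Y : H0 →L[ℂ] H1 := X - (2:ℂ) • (X.comp P) with hYdef
  have hYapp : ∀ x, Y x = X x - X (P x) - X (P x) := by
    intro x
    have h0 : Y x = X x - ((2:ℂ) • (X.comp P)) x := rfl
    rw [h0, ContinuousLinearMap.smul_apply, ContinuousLinearMap.comp_apply, two_smul]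
    abel
  have hPP : ∀ z, P (P z) = P z := fun z => hPid _ (hPmem z)
  have hA0comm : ∀ x, P (A0 x) = A0 (P x) := by
    intro x
    have hd : A0 x = A0 (P x) + A0 (x - P x) := by rw [← map_add]; congr 1; abel
    rw [hd, map_add, hPid _ (hA0L _ (hPmem x)), hPker _ (hA0L' _ (hPperp x)), add_zero]
  have hVXcomm : ∀ x, P (V (X x)) = V (X (P x)) := by
    intro x
    have hd : V (X x) = V (X (P x)) + V (X (x - P x)) := by
      rw [← map_add, ← map_add]; congr 2; abel
    rw [hd, map_add, hPid _ (hVXL _ (hPmem x)), hPker _ (hVXL' _ (hPperp x)), add_zero]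
  have hortho : ∀ x, RCLike.re ⟪x - P x, P x⟫ = 0 := by
    intro x
    have := (Submodule.mem_orthogonal L (x - P x)).mp (hPperp x) (P x) (hPmem x)
    have h2 : ⟪x - P x, P x⟫ = 0 := by
      rw [← inner_conj_symm, this, map_zero]
    rw [h2, map_zero]
  have hnorm1 : ∀ x, ‖Y x‖ ≤ 1 * ‖x‖ := by
    intro x
    have hU : ‖x - P x - P x‖ = ‖x‖ := by
      have e1 : ‖x - P x - P x‖ ^ 2 = ‖x - P x‖ ^ 2 + ‖P x‖ ^ 2 := by
        rw [norm_sub_sq (𝕜 := ℂ), hortho x]; ring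
      have e2 : ‖x‖ ^ 2 = ‖x - P x‖ ^ 2 + ‖P x‖ ^ 2 := by
        have : x = (x - P x) + P x := by abel
        conv_lhs => rw [this]
        rw [norm_add_sq (𝕜 := ℂ), hortho x]; ring
      have h3 : ‖x - P x - P x‖ ^ 2 = ‖x‖ ^ 2 := by rw [e1, e2]
      nlinarith [norm_nonneg (x - P x - P x), norm_nonneg x]
    calc ‖Y x‖ = ‖X (x - P x - P x)‖ := by
          rw [hYapp x, map_sub, map_sub]
    _ ≤ ‖X‖ * ‖x - P x - P x‖ := le_opNorm _ _
    _ ≤ 1 * ‖x‖ := by rw [hU]; exact mul_le_mul_of_nonneg_right hXnorm (norm_nonneg x)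
  refine ⟨ContinuousLinearMap.opNorm_le_bound _ (by norm_num) hnorm1, ?_, ?_⟩
  · apply ContinuousLinearMap.ext
    intro x
    simp only [ContinuousLinearMap.sub_apply, ContinuousLinearMap.add_apply,
      ContinuousLinearMap.comp_apply, ContinuousLinearMap.zero_apply]
    simp only [hYapp, map_sub]
    have e6 : P (V (X (P x))) = V (X (P x)) := by
      have := hVXcomm (P x); rwa [hPP] at this
    have E1 := hX x
    have E2 := hX (P x)
    have E3 := congrArg (fun t => X t) (hA0comm x)
    have E4 := congrArg (fun t => X t) (hVXcomm x)
    have E5 := hL2 (P x) (hPmem x)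
    have E6 := congrArg (fun t => X t) e6
    linear_combination (norm := module) E1 - (2:ℂ) • E2 + (2:ℂ) • E3 + (2:ℂ) • E4
      - (2:ℂ) • E5 - (4:ℂ) • E6
  · have hYs : ∀ z, adjoint Y z = adjoint X z - P (adjoint X z) - P (adjoint X z) := by
      intro z
      apply ext_inner_right ℂ
      intro w
      have h0 : ⟪adjoint Y z, w⟫ = ⟪z, Y w⟫ := adjoint_inner_left Y w z
      rw [h0, hYapp w, inner_sub_right, inner_sub_right, inner_sub_left, inner_sub_left]
      have hXz : ⟪z, X w⟫ = ⟪adjoint X z, w⟫ := (adjoint_inner_left X w z).symm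
      have hXPz : ⟪z, X (P w)⟫ = ⟪P (adjoint X z), w⟫ := by
        rw [← adjoint_inner_left X]
        exact (hPsa _ _).symm
      rw [hXz, hXPz]
    have hGP : ∀ z, adjoint X (X (P z)) = P z := fun z => hL1 _ (hPmem z)
    have hPG : ∀ z, P (adjoint X (X z)) = P z := by
      intro z
      apply ext_inner_right ℂ
      intro y
      calc ⟪P (adjoint X (X z)), y⟫ = ⟪adjoint X (X z), P y⟫ := hPsa _ _
      _ = ⟪X z, X (P y)⟫ := adjoint_inner_left X (P y) (X z)
      _ = ⟪z, adjoint X (X (P y))⟫ := (adjoint_inner_right X z (X (P y))).symm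
      _ = ⟪z, P y⟫ := by rw [hGP y]
      _ = ⟪P z, y⟫ := (hPsa z y).symm
    apply le_antisymm
    · intro x hx
      rw [LinearMap.mem_ker] at hx
      have hx' : x + adjoint Y (X x) = 0 := hx
      rw [hYs (X x), hPG x] at hx'
      have hmem : adjoint X (X x) + x = P x + P x := by
        linear_combination (norm := module) hx'
      have := mem_of_eq X L P hPmem hL1 x hmem
      rw [this]; exact hPmem x
    · intro x hx
      rw [LinearMap.mem_ker]
      show x + adjoint Y (X x) = 0
      rw [hYs (X x), hPG x, hL1 x hx, hPid x hx]
      abel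

lemma Pfacts (L : Submodule ℂ H0) [CompleteSpace L] :
    (∀ x, (L.subtypeL ∘L L.orthogonalProjectionOnto) x ∈ L) ∧
    (∀ l ∈ L, (L.subtypeL ∘L L.orthogonalProjectionOnto) l = l) ∧
    (∀ x y, ⟪(L.subtypeL ∘L L.orthogonalProjectionOnto) x, y⟫
      = ⟪x, (L.subtypeL ∘L L.orthogonalProjectionOnto) y⟫) ∧
    (∀ x, x - (L.subtypeL ∘L L.orthogonalProjectionOnto) x ∈ Lᗮ) ∧
    (∀ x ∈ Lᗮ, (L.subtypeL ∘L L.orthogonalProjectionOnto) x = 0) := by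
  refine ⟨fun x => (L.orthogonalProjectionOnto x).2, ?_, ?_, ?_, ?_⟩
  · intro l hl
    exact Submodule.starProjection_eq_self_iff.mpr hl
  · intro x y
    exact sa_inner _ (isSelfAdjoint_starProjection L) x y
  · intro x
    exact Submodule.sub_starProjection_mem_orthogonal x
  · intro x hx
    show (L.orthogonalProjectionOnto x : H0) = 0
    rw [Submodule.orthogonalProjectionOnto_eq_zero_iff.mpr hx]
    rfl

set_option maxHeartbeats 1000000 in
lemma master (A0 : H0 →L[ℂ] H0) (A1 : H1 →L[ℂ] H1) (V : H1 →L[ℂ] H0)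
    (B : WithLp 2 (H0 × H1) →L[ℂ] WithLp 2 (H0 × H1))
    (hB : ∀ u : WithLp 2 (H0 × H1),
      WithLp.equiv 2 (H0 × H1) (B u) =
        (A0 (WithLp.equiv 2 (H0 × H1) u).1 + V (WithLp.equiv 2 (H0 × H1) u).2,
         adjoint V (WithLp.equiv 2 (H0 × H1) u).1 + A1 (WithLp.equiv 2 (H0 × H1) u).2))
    (X : H0 →L[ℂ] H1) (hXnorm : ‖X‖ ≤ 1)
    (Q : WithLp 2 (H0 × H1) →L[ℂ] WithLp 2 (H0 × H1))
    (hQ : IsIdempotentElem Q)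
    (hQran : LinearMap.range Q.toLinearMap =
      (LinearMap.graph X.toLinearMap).map (WithLp.linearEquiv 2 ℂ (H0 × H1)).symm.toLinearMap)
    (hQcomm : ∀ R : WithLp 2 (H0 × H1) →L[ℂ] WithLp 2 (H0 × H1),
      IsIdempotentElem R → IsSelfAdjoint R →
      (∀ u ∈ LinearMap.range R.toLinearMap, B u ∈ LinearMap.range R.toLinearMap) → Q * R = R * Q)
    (Y : H0 →L[ℂ] H1) (hYnorm : ‖Y‖ ≤ 1)
    (hYpt : ∀ x, A1 (Y x) = Y (A0 x) + Y (V (Y x)) - adjoint V x)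
    (L : Submodule ℂ H0) [CompleteSpace L]
    (hL : L = LinearMap.ker (ContinuousLinearMap.id ℂ H0 + (adjoint Y).comp X).toLinearMap) :
    ∀ x, Y x = X x - X ((L.subtypeL ∘L L.orthogonalProjectionOnto) x)
      - X ((L.subtypeL ∘L L.orthogonalProjectionOnto) x) := by
  obtain ⟨hPmem, hPid, hPsa, hPperp, hPker⟩ := Pfacts L
  set P := L.subtypeL ∘L L.orthogonalProjectionOnto with hPdef
  have hLmem : ∀ l, l ∈ L ↔ adjoint Y (X l) = -l := by
    intro l
    rw [hL, LinearMap.mem_ker]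
    have h0 : (ContinuousLinearMap.id ℂ H0 + (adjoint Y).comp X) l
        = l + adjoint Y (X l) := rfl
    rw [ContinuousLinearMap.coe_coe, h0]
    constructor
    · intro h; linear_combination (norm := module) h
    · intro h; linear_combination (norm := module) h
  have hL1 : ∀ l ∈ L, adjoint X (X l) = l := fun l hl =>
    (ker_facts X Y hXnorm hYnorm l ((hLmem l).mp hl)).1
  have hYl : ∀ l ∈ L, Y l = -X l := fun l hl =>
    (ker_facts X Y hXnorm hYnorm l ((hLmem l).mp hl)).2
  have hdec := decomp X Y A0 A1 V B hB Q hQ hQran hQcomm hYpt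
  intro x
  obtain ⟨n, l, hn, hlk, hx⟩ := hdec x
  have hlL : l ∈ L := (hLmem l).mpr hlk
  have horth : ∀ m ∈ L, ⟪n, m⟫ = 0 := by
    intro m hm
    have h1 : ⟪X n, X m⟫ = ⟪n, m⟫ := by
      rw [← adjoint_inner_right X n (X m), hL1 m hm]
    have h2 : ⟪X n, X m⟫ = -⟪n, m⟫ := by
      rw [← hn, ← adjoint_inner_right Y n (X m), (hLmem m).mp hm, inner_neg_right]
    have h3 := h1.symm.trans h2
    linear_combination h3 / 2
  have hPxl : P x = l := by
    show (L.orthogonalProjectionOnto x : H0) = l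
    apply Submodule.eq_starProjection_of_mem_of_inner_eq_zero hlL
    intro w hw
    have : x - l = n := by rw [hx]; abel
    rw [this]
    exact horth w hw
  have h5 : Y x = X n - X l := by
    rw [hx, map_add, hn, hYl l hlL]
    abel
  have h6 : X x = X n + X l := by rw [hx, map_add]
  rw [hPxl, h5, h6]
  abel

end RicAux

open RicAux ContinuousLinearMap
set_option maxHeartbeats 2000000

/-- Let `X` be a contractive solution of the Riccati equation such that the
orthogonal projection `Q` onto the graph `G(H₀, X)` commutes with the orthogonal projection
onto every closed `B`-invariant subspace of `H = H₀ ⊕ H₁`.  Then the map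
`T_X (Y) = Ker (I + Y* X)` is injective on the set `S` of all contractive solutions of the
Riccati equation, and its image is the set `R` of all closed subspaces
`L ⊆ Ker (I - X* X) ⊓ Ker (X V X - V*)` of `H₀` reducing both `A₀` and `V X`. -/
theorem bijection_contractive_solutions_reducing_subspaces
    {H0 H1 : Type*}
    [NormedAddCommGroup H0] [InnerProductSpace ℂ H0] [CompleteSpace H0]
    [TopologicalSpace.SeparableSpace H0]
    [NormedAddCommGroup H1] [InnerProductSpace ℂ H1] [CompleteSpace H1]
    [TopologicalSpace.SeparableSpace H1]
    (A0 : H0 →L[ℂ] H0) (A1 : H1 →L[ℂ] H1) (V : H1 →L[ℂ] H0)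
    (hA0 : IsSelfAdjoint A0) (hA1 : IsSelfAdjoint A1)
    (B : WithLp 2 (H0 × H1) →L[ℂ] WithLp 2 (H0 × H1))
    (hB : ∀ u : WithLp 2 (H0 × H1),
      WithLp.equiv 2 (H0 × H1) (B u) =
        (A0 (WithLp.equiv 2 (H0 × H1) u).1 + V (WithLp.equiv 2 (H0 × H1) u).2,
         ContinuousLinearMap.adjoint V (WithLp.equiv 2 (H0 × H1) u).1
           + A1 (WithLp.equiv 2 (H0 × H1) u).2))
    (X : H0 →L[ℂ] H1) (hXnorm : ‖X‖ ≤ 1)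
    (hX : A1.comp X - X.comp A0 - X.comp (V.comp X) + ContinuousLinearMap.adjoint V = 0)
    (Q : WithLp 2 (H0 × H1) →L[ℂ] WithLp 2 (H0 × H1))
    (hQ : IsIdempotentElem Q) (hQsa : IsSelfAdjoint Q)
    (hQran : LinearMap.range Q.toLinearMap =
      (LinearMap.graph X.toLinearMap).map (WithLp.linearEquiv 2 ℂ (H0 × H1)).symm.toLinearMap)
    (hQcomm : ∀ R : WithLp 2 (H0 × H1) →L[ℂ] WithLp 2 (H0 × H1),
      IsIdempotentElem R → IsSelfAdjoint R →
      (∀ u ∈ LinearMap.range R.toLinearMap, B u ∈ LinearMap.range R.toLinearMap) → Q * R = R * Q) :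
    Set.InjOn
      (fun Y : H0 →L[ℂ] H1 =>
        LinearMap.ker (ContinuousLinearMap.id ℂ H0 + (ContinuousLinearMap.adjoint Y).comp X).toLinearMap)
      {Y : H0 →L[ℂ] H1 | ‖Y‖ ≤ 1 ∧
        A1.comp Y - Y.comp A0 - Y.comp (V.comp Y) + ContinuousLinearMap.adjoint V = 0} ∧
    (fun Y : H0 →L[ℂ] H1 =>
        LinearMap.ker (ContinuousLinearMap.id ℂ H0 + (ContinuousLinearMap.adjoint Y).comp X).toLinearMap) ''
      {Y : H0 →L[ℂ] H1 | ‖Y‖ ≤ 1 ∧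
        A1.comp Y - Y.comp A0 - Y.comp (V.comp Y) + ContinuousLinearMap.adjoint V = 0} =
      {L : Submodule ℂ H0 | IsClosed (L : Set H0) ∧
        L ≤ LinearMap.ker (ContinuousLinearMap.id ℂ H0 - (ContinuousLinearMap.adjoint X).comp X).toLinearMap ⊓
            LinearMap.ker (X.comp (V.comp X) - ContinuousLinearMap.adjoint V).toLinearMap ∧
        (L.map A0.toLinearMap ≤ L ∧ Lᗮ.map A0.toLinearMap ≤ Lᗮ) ∧
        (L.map (V.comp X).toLinearMap ≤ L ∧ Lᗮ.map (V.comp X).toLinearMap ≤ Lᗮ)} := by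

  classical
  have hXpt : ∀ x, A1 (X x) = X (A0 x) + X (V (X x)) - ContinuousLinearMap.adjoint V x := by
    intro x
    have h1 : A1 (X x) - X (A0 x) - X (V (X x)) + ContinuousLinearMap.adjoint V x = 0 :=
      ContinuousLinearMap.ext_iff.mp hX x
    linear_combination (norm := module) h1
  have hYptof : ∀ Y : H0 →L[ℂ] H1,
      A1.comp Y - Y.comp A0 - Y.comp (V.comp Y) + ContinuousLinearMap.adjoint V = 0 →
      ∀ x, A1 (Y x) = Y (A0 x) + Y (V (Y x)) - ContinuousLinearMap.adjoint V x := by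
    intro Y h x
    have h1 : A1 (Y x) - Y (A0 x) - Y (V (Y x)) + ContinuousLinearMap.adjoint V x = 0 :=
      ContinuousLinearMap.ext_iff.mp h x
    linear_combination (norm := module) h1
  constructor
  · intro Y1 h1 Y2 h2 heq
    obtain ⟨h1n, h1r⟩ := h1
    obtain ⟨h2n, h2r⟩ := h2
    have heq' : LinearMap.ker (ContinuousLinearMap.id ℂ H0
          + (ContinuousLinearMap.adjoint Y1).comp X).toLinearMap
        = LinearMap.ker (ContinuousLinearMap.id ℂ H0
          + (ContinuousLinearMap.adjoint Y2).comp X).toLinearMap := heq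
    set L := LinearMap.ker (ContinuousLinearMap.id ℂ H0
      + (ContinuousLinearMap.adjoint Y1).comp X).toLinearMap with hLdef
    haveI : CompleteSpace L := (ContinuousLinearMap.isClosed_ker _).completeSpace_coe
    have m1 := master A0 A1 V B hB X hXnorm Q hQ hQran hQcomm Y1 h1n (hYptof Y1 h1r) L hLdef
    have m2 := master A0 A1 V B hB X hXnorm Q hQ hQran hQcomm Y2 h2n (hYptof Y2 h2r) L
      (hLdef.trans heq')
    ext x
    rw [m1 x, m2 x]
  · ext L
    simp only [Set.mem_image, Set.mem_setOf_eq]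
    constructor
    · rintro ⟨Y, ⟨hYn, hYr⟩, rfl⟩
      have hYpt := hYptof Y hYr
      set LY := LinearMap.ker (ContinuousLinearMap.id ℂ H0
        + (ContinuousLinearMap.adjoint Y).comp X).toLinearMap with hLYdef
      haveI : CompleteSpace LY := (ContinuousLinearMap.isClosed_ker _).completeSpace_coe
      have m := master A0 A1 V B hB X hXnorm Q hQ hQran hQcomm Y hYn hYpt LY hLYdef
      obtain ⟨hPmem, hPid, hPsa, hPperp, hPker⟩ := Pfacts LY
      set P := LY.subtypeL ∘L LY.orthogonalProjectionOnto with hPdef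
      have hLmem : ∀ l, l ∈ LY ↔ ContinuousLinearMap.adjoint Y (X l) = -l := by
        intro l
        rw [hLYdef, LinearMap.mem_ker]
        have h0 : (ContinuousLinearMap.id ℂ H0
            + (ContinuousLinearMap.adjoint Y).comp X) l
            = l + ContinuousLinearMap.adjoint Y (X l) := rfl
        rw [ContinuousLinearMap.coe_coe, h0]
        constructor
        · intro h; linear_combination (norm := module) h
        · intro h; linear_combination (norm := module) h
      have hL1 : ∀ l ∈ LY, ContinuousLinearMap.adjoint X (X l) = l := fun l hl =>
        (ker_facts X Y hXnorm hYn l ((hLmem l).mp hl)).1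
      obtain ⟨hA0c, hVXc, hXVX⟩ :=
        hard_alg A0 A1 V hA0 hA1 X Y hXpt hYpt LY P hPmem hPid hPsa hL1 m
      refine ⟨ContinuousLinearMap.isClosed_ker _, ?_, ⟨?_, ?_⟩, ⟨?_, ?_⟩⟩
      · intro l hl
        rw [Submodule.mem_inf]
        constructor
        · rw [LinearMap.mem_ker]
          show l - ContinuousLinearMap.adjoint X (X l) = 0
          rw [hL1 l hl, sub_self]
        · rw [LinearMap.mem_ker]
          show X (V (X l)) - ContinuousLinearMap.adjoint V l = 0
          have h := hXVX l
          rw [hPid l hl] at h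
          rw [h, sub_self]
      · intro y hy
        obtain ⟨l, hl, rfl⟩ := Submodule.mem_map.mp hy
        have h : P (A0 l) = A0 l := by rw [hA0c l, hPid l hl]
        exact h ▸ hPmem (A0 l)
      · intro y hy
        obtain ⟨m', hm, rfl⟩ := Submodule.mem_map.mp hy
        have h : A0 m' - P (A0 m') ∈ LYᗮ := hPperp (A0 m')
        rw [hA0c m', hPker m' hm, map_zero, sub_zero] at h
        exact h
      · intro y hy
        obtain ⟨l, hl, rfl⟩ := Submodule.mem_map.mp hy
        show V (X l) ∈ LY
        have h : P (V (X l)) = V (X l) := by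
          rw [hVXc l, hPid l hl]
        exact h ▸ hPmem (V (X l))
      · intro y hy
        obtain ⟨m', hm, rfl⟩ := Submodule.mem_map.mp hy
        show V (X m') ∈ LYᗮ
        have h : V (X m') - P (V (X m')) ∈ LYᗮ := hPperp (V (X m'))
        rw [hVXc m', hPker m' hm, map_zero, map_zero, sub_zero] at h
        exact h
    · rintro ⟨hclosed, hle, ⟨hA0m, hA0m'⟩, ⟨hVXm, hVXm'⟩⟩
      haveI : CompleteSpace L := hclosed.completeSpace_coe
      obtain ⟨hPmem, hPid, hPsa, hPperp, hPker⟩ := Pfacts L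
      have hL1 : ∀ l ∈ L, ContinuousLinearMap.adjoint X (X l) = l := by
        intro l hl
        have h := (Submodule.mem_inf.mp (hle hl)).1
        rw [LinearMap.mem_ker] at h
        have h' : l - ContinuousLinearMap.adjoint X (X l) = 0 := h
        linear_combination (norm := module) -h'
      have hL2 : ∀ l ∈ L, X (V (X l)) = ContinuousLinearMap.adjoint V l := by
        intro l hl
        have h := (Submodule.mem_inf.mp (hle hl)).2
        rw [LinearMap.mem_ker] at h
        have h' : X (V (X l)) - ContinuousLinearMap.adjoint V l = 0 := h
        linear_combination (norm := module) h'
      have hA0L : ∀ l ∈ L, A0 l ∈ L := fun l hl => hA0m (Submodule.mem_map_of_mem hl)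
      have hA0L' : ∀ m ∈ Lᗮ, A0 m ∈ Lᗮ := fun m hm => hA0m' (Submodule.mem_map_of_mem hm)
      have hVXL : ∀ l ∈ L, V (X l) ∈ L := fun l hl => hVXm (Submodule.mem_map_of_mem hl)
      have hVXL' : ∀ m ∈ Lᗮ, V (X m) ∈ Lᗮ := fun m hm => hVXm' (Submodule.mem_map_of_mem hm)
      obtain ⟨c1, c2, c3⟩ := easy_dir A0 A1 V X hXnorm hXpt L
        (L.subtypeL ∘L L.orthogonalProjectionOnto) hPmem hPid hPsa hPperp hPker
        hL1 hL2 hA0L hA0L' hVXL hVXL'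
      exact ⟨X - (2:ℂ) • (X.comp (L.subtypeL ∘L L.orthogonalProjectionOnto)), ⟨c1, c2⟩, c3⟩

end
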